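/- Let n ≥ 2, m ≥ 2, and let X be a unit vector in V_{n,m}. Suppose that for some 1 ≤ a ≤ m−1 there exist a nonzero vector v ∈ V_{n,a} and c ∈ ℂ with |c| = 1 such that v = c · T_{m−a}(conj X) T_a(X) v, where conj X denotes the coordinatewise complex conjugate of X. Then c = 1 and X is periodic. -/

import Mathlib

noncomputable section

/-- `Vnm n m` is the Hilbert space `ℓ²({1,…,n}^m)`, identified with `(ℂ^n)^{⊗m}`. -/
abbrev Vnm (n m : ℕ) : Type := EuclideanSpace ℂ (Fin m → Fin n)

/-- The tensor product `x ⊗ y`, via `(x ⊗ y)_{JK} = x_J y_K`. -/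
def tensV {n m l : ℕ} (x : Vnm n m) (y : Vnm n l) : Vnm n (m + l) :=
  WithLp.toLp 2 fun J => x (fun i => J (Fin.castAdd l i)) * y (fun i => J (Fin.natAdd m i))

/-- Re-indexing of a tensor along an equality of lengths. -/
def castV {n m m' : ℕ} (h : m = m') (z : Vnm n m) : Vnm n m' :=
  WithLp.toLp 2 fun J => z (fun i => J (Fin.cast h i))

/-- The tensor power `x^{⊗p}`. -/
def tpowV {n m : ℕ} (x : Vnm n m) (p : ℕ) : Vnm n (p * m) :=
  WithLp.toLp 2 fun J => ∏ i : Fin p, x (fun t => J ⟨(i : ℕ) * m + (t : ℕ), by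
    have h2 : (t : ℕ) < m := t.isLt
    have h1 : (i : ℕ) + 1 ≤ p := i.isLt
    have h3 : ((i : ℕ) + 1) * m = (i : ℕ) * m + m := by ring
    have h4 : ((i : ℕ) + 1) * m ≤ p * m := Nat.mul_le_mul_right m h1
    omega⟩)

/-- The coordinatewise complex conjugate. -/
def conjV {n m : ℕ} (z : Vnm n m) : Vnm n m := WithLp.toLp 2 fun J => starRingEnd ℂ (z J)

/-- A unit vector `z` is periodic if `z = x^{⊗p}` for some unit vector `x` and `p ≥ 2`;
it is nonperiodic if it is not periodic. -/
def PeriodicV {n m : ℕ} (z : Vnm n m) : Prop :=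
  ∃ (m' p : ℕ) (x : Vnm n m') (h : p * m' = m),
    ‖x‖ = 1 ∧ 2 ≤ p ∧ castV h (tpowV x p) = z

/-- The matricization of `z ∈ V_{n,b+a}` as an operator `V_{n,a} → V_{n,b}`,
`(T z) e_K = Σ_{|J|=b} z_{JK} e_J`. -/
def matT {n b a : ℕ} (z : Vnm n (b + a)) :
    EuclideanSpace ℂ (Fin a → Fin n) →L[ℂ] EuclideanSpace ℂ (Fin b → Fin n) :=
  LinearMap.toContinuousLinearMap
    (Matrix.toEuclideanLin
      (Matrix.of fun (J : Fin b → Fin n) (K : Fin a → Fin n) => z (Fin.append J K)))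

/-- The matricization `T_a(z) : V_{n,a} → V_{n,m-a}` of `z ∈ V_{n,m}`,
`T_a(z) e_K = Σ_{|J|=m−a} z_{JK} e_J`. -/
def Tmat {n m : ℕ} (a : ℕ) (h : a ≤ m) (z : Vnm n m) :
    EuclideanSpace ℂ (Fin a → Fin n) →L[ℂ] EuclideanSpace ℂ (Fin (m - a) → Fin n) :=
  matT (castV (by omega : m = (m - a) + a) z)

/-- `z` is indecomposable if it is not a tensor product of lower-degree tensors. -/
def IndecomposableV {n m : ℕ} (z : Vnm n m) : Prop :=
  1 ≤ m ∧ ¬ ∃ (a b : ℕ) (h : a + b = m) (x : Vnm n a) (y : Vnm n b),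
    1 ≤ a ∧ 1 ≤ b ∧ castV h (tensV x y) = z

/-- The iterated tensor product `x₁ ⊗ ⋯ ⊗ x_l` of homogeneous tensors of degrees `ms i`. -/
def bigTensV {n l : ℕ} (ms : Fin l → ℕ) (xs : ∀ i, Vnm n (ms i)) : Vnm n (∑ i, ms i) :=
  WithLp.toLp 2 fun J => ∏ i : Fin l, xs i (fun t => J ⟨(∑ j ∈ Finset.Iio i, ms j) + (t : ℕ), by
    have h1 : (∑ j ∈ Finset.Iio i, ms j) + ms i ≤ ∑ j, ms j := by
      calc (∑ j ∈ Finset.Iio i, ms j) + ms i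
          = ∑ j ∈ insert i (Finset.Iio i), ms j := by
            rw [Finset.sum_insert (by simp)]; ring
        _ ≤ ∑ j, ms j := Finset.sum_le_sum_of_subset (Finset.subset_univ _)
    have h2 : (t : ℕ) < ms i := t.isLt
    omega⟩)

/-- `z ⊠ y ∈ V_{nn',m}`: `(z ⊠ y)_L = z_J y_K` where `L = J ⊠ K` is given by the
pairing `l_t = n'·j_t + k_t` of `{0,…,n−1}×{0,…,n'−1}` with `{0,…,nn'−1}`. -/
def boxTensV {n n' m : ℕ} (z : Vnm n m) (y : Vnm n' m) : Vnm (n * n') m :=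
  WithLp.toLp 2 fun L =>
    z (fun t => ⟨(L t : ℕ) / n', by
        have h := (L t).isLt
        have hn' : 0 < n' := Nat.pos_of_ne_zero (by rintro rfl; simp at h)
        exact (Nat.div_lt_iff_lt_mul hn').mpr h⟩) *
    y (fun t => ⟨(L t : ℕ) % n', by
        have h := (L t).isLt
        have hn' : 0 < n' := Nat.pos_of_ne_zero (by rintro rfl; simp at h)
        exact Nat.mod_lt _ hn'⟩)

/-- `z * y := z^{⊗α} ⊠ y^{⊗β} ∈ V_{nn',d}` where `d = αm = βl` is the lcm of `m` and `l`. -/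
def starV {n n' m l : ℕ} (z : Vnm n m) (y : Vnm n' l) : Vnm (n * n') (Nat.lcm m l) :=
  boxTensV (castV (Nat.div_mul_cancel (Nat.dvd_lcm_left m l)) (tpowV z (Nat.lcm m l / m)))
    (castV (Nat.div_mul_cancel (Nat.dvd_lcm_right m l)) (tpowV y (Nat.lcm m l / l)))

/-- Conjugacy of homogeneous tensors: `z = y`, or `z = x₁ ⊗ x₂` and `y = x₂ ⊗ x₁`
for some unit vectors `x₁, x₂`. -/
def ConjVec {n m l : ℕ} (z : Vnm n m) (y : Vnm n l) : Prop :=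
  (∃ h : m = l, castV h z = y) ∨
    ∃ (a b : ℕ) (x₁ : Vnm n a) (x₂ : Vnm n b) (h₁ : a + b = m) (h₂ : b + a = l),
      ‖x₁‖ = 1 ∧ ‖x₂‖ = 1 ∧ castV h₁ (tensV x₁ x₂) = z ∧ castV h₂ (tensV x₂ x₁) = y

/-- A Cuntz family of order `n` on `H`: `Sᵢ* Sⱼ = δᵢⱼ 1` and `Σᵢ Sᵢ Sᵢ* = 1`. -/
def IsCuntzFamily {H : Type*} [NormedAddCommGroup H] [InnerProductSpace ℂ H]
    [CompleteSpace H] {n : ℕ} (S : Fin n → H →L[ℂ] H) : Prop :=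
  (∀ i j, (ContinuousLinearMap.adjoint (S i)).comp (S j) = if i = j then 1 else 0) ∧
    ∑ i, (S i).comp (ContinuousLinearMap.adjoint (S i)) = 1

/-- `S_J := S_{j₁} ∘ ⋯ ∘ S_{j_k}` for a word `J = (j₁,…,j_k)`, with `S_∅ = 1`. -/
def Sword {H : Type*} [NormedAddCommGroup H] [InnerProductSpace ℂ H]
    {ι : Type*} (S : ι → H →L[ℂ] H) : (k : ℕ) → (Fin k → ι) → (H →L[ℂ] H)
  | 0, _ => 1
  | (k + 1), J => (S (J 0)).comp (Sword S k (fun i => J i.succ))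

/-- `s(z) := Σ_{|J|=m} z_J S_J`. -/
def sop {H : Type*} [NormedAddCommGroup H] [InnerProductSpace ℂ H]
    {n m : ℕ} (S : Fin n → H →L[ℂ] H) (z : Vnm n m) : H →L[ℂ] H :=
  ∑ J : Fin m → Fin n, z J • Sword S m J


namespace SC5

variable {n : ℕ}

def shift (k : ℕ) (f : ℕ → Fin n) : ℕ → Fin n := fun t => f (k + t)

def res (m : ℕ) (f : ℕ → Fin n) : Fin m → Fin n := fun i => f i

def ev {m : ℕ} (z : Vnm n m) (f : ℕ → Fin n) : ℂ := z (res m f)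

def glue (k : ℕ) (f g : ℕ → Fin n) : ℕ → Fin n :=
  fun t => if h : t < k then f t else g (t - k)

def unres [NeZero n] {m : ℕ} (J : Fin m → Fin n) : ℕ → Fin n :=
  fun t => if h : t < m then J ⟨t, h⟩ else 0

def mg {a b m : ℕ} (h : a + b = m) (J : Fin a → Fin n) (K : Fin b → Fin n) :
    Fin m → Fin n :=
  fun i => if hi : (i : ℕ) < a then J ⟨i, hi⟩ else K ⟨(i : ℕ) - a, by omega⟩

lemma res_unres [NeZero n] {m : ℕ} (J : Fin m → Fin n) : res m (unres J) = J := by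
  funext i
  simp [res, unres, i.isLt]

lemma ev_unres [NeZero n] {m : ℕ} (z : Vnm n m) (J : Fin m → Fin n) :
    ev z (unres J) = z J := by
  unfold ev
  rw [res_unres]

lemma ev_congr {m : ℕ} (z : Vnm n m) {f g : ℕ → Fin n}
    (h : ∀ t < m, f t = g t) : ev z f = ev z g := by
  unfold ev
  rw [show res m f = res m g from funext fun i => h i i.isLt]

lemma ext_ev [NeZero n] {m : ℕ} {y z : Vnm n m}
    (h : ∀ f, ev y f = ev z f) : y = z := by
  ext J
  have := h (unres J)
  rwa [ev_unres, ev_unres] at this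

lemma shift_zero (f : ℕ → Fin n) : shift 0 f = f := by
  funext t; simp [shift]

lemma shift_shift (k l : ℕ) (f : ℕ → Fin n) :
    shift k (shift l f) = shift (l + k) f := by
  funext t; simp [shift]; congr 1; omega

lemma ev_glue {m k : ℕ} (z : Vnm n m) (h : m ≤ k) (f g : ℕ → Fin n) :
    ev z (glue k f g) = ev z f := by
  apply ev_congr
  intro t ht
  have : t < k := by omega
  simp [glue, this]

lemma shift_glue_le {k l : ℕ} (h : k ≤ l) (f g : ℕ → Fin n) :
    shift k (glue l f g) = glue (l - k) (shift k f) g := by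
  funext t
  simp only [shift, glue]
  split_ifs with h1 h2 h2
  · rfl
  · omega
  · omega
  · congr 1; omega

lemma shift_glue_self (l : ℕ) (f g : ℕ → Fin n) :
    shift l (glue l f g) = g := by
  funext t
  simp only [shift, glue]
  rw [dif_neg (by omega)]
  congr 1; omega

lemma shift_glue_ge {k l : ℕ} (h : l ≤ k) (f g : ℕ → Fin n) :
    shift k (glue l f g) = shift (k - l) g := by
  funext t
  simp only [shift, glue]
  rw [dif_neg (by omega)]
  congr 1; omega

lemma mg_res {a b m : ℕ} (h : a + b = m) (f : ℕ → Fin n) :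
    mg h (res a f) (res b (shift a f)) = res m f := by
  funext i
  simp only [mg, res, shift]
  split_ifs with h1
  · rfl
  · exact congrArg f (by omega)

lemma res_unres_mg_left [NeZero n] {a b m : ℕ} (h : a + b = m)
    (J : Fin a → Fin n) (K : Fin b → Fin n) :
    res a (unres (mg h J K)) = J := by
  funext i
  have h1 : (i : ℕ) < m := by omega
  simp [res, unres, h1, mg, i.isLt]

lemma res_shift_unres_mg_right [NeZero n] {a b m : ℕ} (h : a + b = m)
    (J : Fin a → Fin n) (K : Fin b → Fin n) :
    res b (shift a (unres (mg h J K))) = K := by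
  funext i
  have h1 : a + (i : ℕ) < m := by omega
  simp only [res, shift, unres, dif_pos h1, mg]
  rw [dif_neg (by omega)]
  exact congrArg K (Fin.ext (by simp))

def mgEquiv {a b m : ℕ} (h : a + b = m) :
    ((Fin a → Fin n) × (Fin b → Fin n)) ≃ (Fin m → Fin n) where
  toFun p := mg h p.1 p.2
  invFun M := (fun i => M ⟨i, by omega⟩, fun i => M ⟨a + i, by omega⟩)
  left_inv p := by
    ext i
    · simp [mg, i.isLt]
    · simp only [mg]
      rw [dif_neg (by omega)]
      exact congrArg _ (Fin.ext (by simp))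
  right_inv M := by
    funext i
    simp only [mg]
    split_ifs with h1
    · rfl
    · exact congrArg M (Fin.ext (by simp; omega))

lemma sum_mg {γ : Type*} [AddCommMonoid γ] {a b m : ℕ} (h : a + b = m)
    (G : (Fin m → Fin n) → γ) :
    ∑ M, G M = ∑ J, ∑ K, G (mg h J K) := by
  rw [← Equiv.sum_comp (mgEquiv h) G, Fintype.sum_prod_type]
  rfl

lemma norm_sq_eq {m : ℕ} (z : Vnm n m) : ‖z‖ ^ 2 = ∑ M, ‖z M‖ ^ 2 := by
  rw [EuclideanSpace.norm_eq, Real.sq_sqrt]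
  positivity

lemma sq_one' {x : ℝ} (h0 : 0 ≤ x) (h : x ^ 2 = 1) : x = 1 := by
  have h1 : (x - 1) * (x + 1) = 0 := by linear_combination h
  rcases mul_eq_zero.mp h1 with h2 | h2
  · linarith
  · linarith

lemma norm_one_of_nsq {m : ℕ} (z : Vnm n m) (h : ∑ M, ‖z M‖ ^ 2 = 1) :
    ‖z‖ = 1 := by
  apply sq_one' (norm_nonneg z)
  rw [norm_sq_eq]; exact h

lemma ev_tpow {g : ℕ} (x : Vnm n g) (p : ℕ) (f : ℕ → Fin n) :
    ev (tpowV x p) f = ∏ i : Fin p, ev x (shift ((i : ℕ) * g) f) := rfl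

lemma ev_castV {m m' : ℕ} (h : m = m') (z : Vnm n m) (f : ℕ → Fin n) :
    ev (castV h z) f = ev z f := rfl

lemma ev_smul {m : ℕ} (ρ : ℂ) (x : Vnm n m) (f : ℕ → Fin n) :
    ev (ρ • x) f = ρ * ev x f := rfl

lemma ev_zero {m : ℕ} (f : ℕ → Fin n) : ev (0 : Vnm n m) f = 0 := rfl


lemma res_eq_of_agree {m : ℕ} {f g : ℕ → Fin n} (h : ∀ t < m, f t = g t) :
    res m f = res (n := n) m g := by
  funext i; exact h i i.isLt

lemma tpow_succ_apply {g : ℕ} (x : Vnm n g) (p : ℕ)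
    (h : g + p * g = (p + 1) * g)
    (J₁ : Fin g → Fin n) (J₂ : Fin (p * g) → Fin n) :
    tpowV x (p + 1) (mg h J₁ J₂) = x J₁ * tpowV x p J₂ := by
  unfold tpowV
  simp only [WithLp.ofLp_toLp]
  rw [Fin.prod_univ_succ]
  congr 1
  · apply congrArg
    funext t
    simp only [mg, Fin.val_zero, Nat.zero_mul, Nat.zero_add]
    rw [dif_pos t.isLt]
  · apply Finset.prod_congr rfl
    intro i _
    apply congrArg
    funext t
    simp only [mg]
    have hc : ¬ ((i : ℕ) + 1) * g + (t : ℕ) < g := by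
      have : ((i : ℕ) + 1) * g = (i : ℕ) * g + g := by ring
      omega
    simp only [Fin.val_succ]
    rw [dif_neg hc]
    apply congrArg
    apply Fin.ext
    simp only []
    have : ((i : ℕ) + 1) * g = (i : ℕ) * g + g := by ring
    omega

lemma nsq_tpow {g : ℕ} (x : Vnm n g) (p : ℕ) :
    ∑ M, ‖tpowV x p M‖ ^ 2 = (∑ J, ‖x J‖ ^ 2) ^ p := by
  induction p with
  | zero =>
      have : ∀ M : Fin (0 * g) → Fin n, ‖tpowV x 0 M‖ ^ 2 = 1 := by
        intro M; simp [tpowV]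
      simp only [this, Finset.sum_const, Finset.card_univ, nsmul_eq_mul, mul_one, pow_zero]
      rw [Fintype.card_fun]
      simp
  | succ p ih =>
      have h : g + p * g = (p + 1) * g := by ring
      rw [sum_mg h (fun M => ‖tpowV x (p+1) M‖ ^ 2)]
      have : ∀ (J₁ : Fin g → Fin n) (J₂ : Fin (p * g) → Fin n),
          ‖tpowV x (p+1) (mg h J₁ J₂)‖ ^ 2 = ‖x J₁‖ ^ 2 * ‖tpowV x p J₂‖ ^ 2 := by
        intro J₁ J₂
        rw [tpow_succ_apply x p h J₁ J₂, norm_mul, mul_pow]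
      simp only [this, ← Finset.sum_mul, ← Finset.mul_sum]
      rw [ih]
      ring

lemma norm_tpow {g : ℕ} (x : Vnm n g) (p : ℕ) : ‖tpowV x p‖ = ‖x‖ ^ p := by
  have h1 := norm_sq_eq (tpowV x p)
  have h2 := norm_sq_eq x
  have h3 : ‖tpowV x p‖ ^ 2 = (‖x‖ ^ p) ^ 2 := by
    rw [h1, nsq_tpow, ← h2]; ring
  have h4 : 0 ≤ ‖tpowV x p‖ := norm_nonneg _
  have h5 : 0 ≤ ‖x‖ ^ p := pow_nonneg (norm_nonneg _) p
  nlinarith [sq_nonneg (‖tpowV x p‖ - ‖x‖ ^ p), sq_nonneg (‖tpowV x p‖ + ‖x‖ ^ p)]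

lemma norm_castV {m m' : ℕ} (h : m = m') (z : Vnm n m) :
    ‖castV h z‖ = ‖z‖ := by
  subst h
  have : castV rfl z = z := by
    ext J; simp [castV]
  rw [this]

lemma cs_eq {E : Type*} [NormedAddCommGroup E] [InnerProductSpace ℂ E]
    {v y : E} (hv : v ≠ 0)
    (h : ‖(inner ℂ y v)‖ = ‖y‖ * ‖v‖) : ∃ r : ℂ, y = r • v := by
  by_cases hy : y = 0
  · exact ⟨0, by simp [hy]⟩
  · have h' : ‖(inner ℂ v y)‖ = ‖v‖ * ‖y‖ := by
      rw [← inner_conj_symm v y, RCLike.norm_conj, h]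
      ring
    obtain ⟨r, _, hr⟩ := (norm_inner_eq_norm_iff hv hy).mp h'
    exact ⟨r, hr⟩


def Concl (a b : ℕ) (ξ : Vnm n b) (η : Vnm n a) : Prop :=
  ∃ g : ℕ, 0 < g ∧ g ∣ a ∧ g ∣ b ∧ ∃ x : Vnm n g, ‖x‖ = 1 ∧ ∃ θ θ' : ℂ,
    (∀ f, ev ξ f = θ * ∏ i : Fin (b / g), ev x (shift ((i : ℕ) * g) f)) ∧
    (∀ f, ev η f = θ' * ∏ i : Fin (a / g), ev x (shift ((i : ℕ) * g) f))

lemma prod_fin_one {k : ℕ} (hk : k = 1) (F : Fin k → ℂ) :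
    ∏ i, F i = F ⟨0, by omega⟩ := by
  subst hk
  simp [Fin.prod_univ_one]

lemma Concl_swap {a b : ℕ} {ξ : Vnm n b} {η : Vnm n a} (h : Concl a b ξ η) :
    Concl b a η ξ := by
  obtain ⟨g, hg, hga, hgb, x, hx, θ, θ', h1, h2⟩ := h
  exact ⟨g, hg, hgb, hga, x, hx, θ', θ, h2, h1⟩

lemma exists_ev_ne_zero [NeZero n] {m : ℕ} {z : Vnm n m} (hz : ‖z‖ = 1) :
    ∃ f, ev z f ≠ 0 := by
  by_contra hcon
  push_neg at hcon
  have hzz : z = 0 := ext_ev (fun f => by rw [hcon f, ev_zero])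
  rw [hzz, norm_zero] at hz
  norm_num at hz

lemma keyStep [NeZero n] {N : ℕ}
    (IH : ∀ a b, 1 ≤ a → 1 ≤ b → a + b ≤ N →
      ∀ (ξ : Vnm n b) (η : Vnm n a) (c : ℂ), ‖ξ‖ = 1 → ‖η‖ = 1 → ‖c‖ = 1 →
      (∀ f, ev ξ f * ev η (shift b f) = c * (ev η f * ev ξ (shift a f))) →
      c = 1 ∧ Concl a b ξ η)
    {a b : ℕ} (ha : 1 ≤ a) (hlt : a < b) (hN : a + b ≤ N + 1)
    (ξ : Vnm n b) (η : Vnm n a) (c : ℂ)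
    (hξ : ‖ξ‖ = 1) (hη : ‖η‖ = 1) (hc : ‖c‖ = 1)
    (hrel : ∀ f, ev ξ f * ev η (shift b f) = c * (ev η f * ev ξ (shift a f))) :
    c = 1 ∧ Concl a b ξ η := by
  obtain ⟨d, hbd⟩ : ∃ d, a + d = b := ⟨b - a, by omega⟩
  have hd : 1 ≤ d := by omega
  obtain ⟨f₀, he₀⟩ : ∃ f₀, ev η f₀ ≠ 0 := exists_ev_ne_zero hη
  let ζ : Vnm n d := WithLp.toLp 2 fun R => c * ev ξ (glue d (unres R) f₀) / ev η f₀
  have hζev : ∀ g', ev ζ g' = c * ev ξ (glue d g' f₀) / ev η f₀ := by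
    intro g'
    have hgl : glue d (unres (res d g')) f₀ = glue (n := n) d g' f₀ := by
      funext t
      by_cases h : t < d
      · simp [glue, unres, res, h]
      · simp [glue, h]
    show c * ev ξ (glue d (unres (res d g')) f₀) / ev η f₀ = _
    rw [hgl]
  have hξfact : ∀ f, ev ξ f = ev η f * ev ζ (shift a f) := by
    intro f
    have h1 := hrel (glue b f f₀)
    rw [ev_glue ξ (le_refl b), shift_glue_self, ev_glue η (le_of_lt hlt),
      shift_glue_le (le_of_lt hlt), show b - a = d by omega] at h1
    rw [hζev (shift a f)]
    field_simp
    linear_combination h1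
  have hfact_entry : ∀ (P : Fin a → Fin n) (R : Fin d → Fin n),
      ξ (mg hbd P R) = η P * ζ R := by
    intro P R
    have h1 := hξfact (unres (mg hbd P R))
    rw [ev_unres] at h1
    have h2 : ev η (unres (mg hbd P R)) = η P := by
      unfold ev; rw [res_unres_mg_left]
    have h3 : ev ζ (shift a (unres (mg hbd P R))) = ζ R := by
      unfold ev; rw [res_shift_unres_mg_right]
    rw [h2, h3] at h1
    exact h1
  have hζ : ‖ζ‖ = 1 := by
    apply norm_one_of_nsq
    have h1 : (1:ℝ) = ∑ J, ‖ξ J‖^2 := by rw [← norm_sq_eq, hξ]; norm_num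
    rw [sum_mg hbd (fun M => ‖ξ M‖^2)] at h1
    simp only [hfact_entry, norm_mul, mul_pow] at h1
    rw [← Fintype.sum_mul_sum] at h1
    have h2 : ∑ P, ‖η P‖^2 = 1 := by rw [← norm_sq_eq, hη]; norm_num
    rw [h2, one_mul] at h1
    exact h1.symm
  have hrel' : ∀ f, ev ζ f * ev η (shift d f) = c * (ev η f * ev ζ (shift a f)) := by
    intro f
    have e1 : ev ξ (glue a f₀ f) = ev η f₀ * ev ζ f := by
      rw [hξfact, ev_glue η (le_refl a), shift_glue_self]
    have e2 : shift b (glue a f₀ f) = shift d f := by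
      rw [shift_glue_ge (show a ≤ b by omega), show b - a = d by omega]
    have e3 : ev η (glue a f₀ f) = ev η f₀ := ev_glue η (le_refl a) f₀ f
    have e4 : ev ξ (shift a (glue a f₀ f)) = ev η f * ev ζ (shift a f) := by
      rw [shift_glue_self, hξfact f]
    have h1 := hrel (glue a f₀ f)
    rw [e1, e2, e3, e4] at h1
    exact mul_left_cancel₀ he₀ (by linear_combination h1)
  obtain ⟨hc1, g, hg, hga, hgd, x, hx, θ, θ', hζx, hηx⟩ :=
    IH a d ha hd (by omega) ζ η c hζ hη hc hrel'
  have hgb : g ∣ b := hbd ▸ dvd_add hga hgd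
  refine ⟨hc1, g, hg, hga, hgb, x, hx, θ' * θ, θ', ?_, hηx⟩
  intro f
  have hag : a / g * g = a := Nat.div_mul_cancel hga
  have hbg : b / g = a / g + d / g := by
    have : b = g * (a / g) + d := by rw [mul_comm, hag, hbd]
    rw [this, Nat.mul_add_div hg]
  rw [hξfact f, hηx f, hζx (shift a f), hbg, Fin.prod_univ_add]
  have hsh : ∀ i : ℕ, shift (i * g) (shift a f) = shift ((a / g + i) * g) f := by
    intro i
    rw [shift_shift]
    congr 1
    rw [add_mul, hag]
  simp only [hsh, Fin.coe_castAdd, Fin.coe_natAdd]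
  ring

lemma key [NeZero n] : ∀ N a b, 1 ≤ a → 1 ≤ b → a + b ≤ N →
    ∀ (ξ : Vnm n b) (η : Vnm n a) (c : ℂ), ‖ξ‖ = 1 → ‖η‖ = 1 → ‖c‖ = 1 →
    (∀ f, ev ξ f * ev η (shift b f) = c * (ev η f * ev ξ (shift a f))) →
    c = 1 ∧ Concl a b ξ η := by
  intro N
  induction N with
  | zero => intro a b ha hb hab; omega
  | succ N IH =>
    intro a b ha hb hab ξ η c hξ hη hc hrel
    rcases lt_trichotomy a b with hlt | heqab | hgt
    · exact keyStep IH ha hlt hab ξ η c hξ hη hc hrel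
    · subst heqab
      have hpt : ∀ P Q : Fin a → Fin n, ξ P * η Q = c * (η P * ξ Q) := by
        intro P Q
        have h1 := hrel (glue a (unres P) (unres Q))
        rw [ev_glue ξ (le_refl a), ev_glue η (le_refl a), shift_glue_self] at h1
        rw [ev_unres, ev_unres, ev_unres, ev_unres] at h1
        exact h1
      obtain ⟨Q₀, hQ₀⟩ : ∃ Q₀, ξ Q₀ ≠ 0 := by
        by_contra hcon
        push_neg at hcon
        have : ξ = 0 := PiLp.ext hcon
        rw [this, norm_zero] at hξ
        norm_num at hξ
      have hc0 : c ≠ 0 := fun h => by simp [h] at hc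
      have hτ : ∀ P, η P = (η Q₀ / (c * ξ Q₀)) * ξ P := by
        intro P
        have h1 := hpt P Q₀
        field_simp
        linear_combination -h1
      have hτ0 : η Q₀ ≠ 0 := by
        intro h0
        have hz : ∀ P, η P = 0 := fun P => by rw [hτ P, h0]; ring
        have : η = 0 := PiLp.ext hz
        rw [this, norm_zero] at hη
        norm_num at hη
      have hc1 : c = 1 := by
        have h1 := hpt Q₀ Q₀
        have h2 : c * (η Q₀ * ξ Q₀) = 1 * (η Q₀ * ξ Q₀) := by
          rw [one_mul]; linear_combination -h1
        exact mul_right_cancel₀ (mul_ne_zero hτ0 hQ₀) h2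
      refine ⟨hc1, a, ha, dvd_refl a, dvd_refl a, ξ, hξ, 1,
        η Q₀ / (c * ξ Q₀), ?_, ?_⟩
      · intro f
        rw [prod_fin_one (Nat.div_self ha)]
        simp [shift_zero]
      · intro f
        rw [prod_fin_one (Nat.div_self ha)]
        simp only [Nat.zero_mul, shift_zero]
        exact hτ (res a f)
    · have hc0 : c ≠ 0 := fun h => by simp [h] at hc
      have hrel'' : ∀ f, ev η f * ev ξ (shift a f) =
          c⁻¹ * (ev ξ f * ev η (shift b f)) := by
        intro f
        rw [hrel f]
        field_simp
      have hcinv : ‖c⁻¹‖ = 1 := by rw [norm_inv, hc]; norm_num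
      obtain ⟨hc1, C⟩ := keyStep IH hb hgt (by omega) η ξ c⁻¹ hη hξ hcinv hrel''
      refine ⟨?_, Concl_swap C⟩
      rwa [inv_eq_one] at hc1

end SC5

namespace SC5

lemma sq_eq {a b : ℝ} (ha : 0 ≤ a) (hb : 0 ≤ b) (h : a ^ 2 = b ^ 2) : a = b := by
  nlinarith [sq_nonneg (a - b), sq_nonneg (a + b)]

lemma pow_eq_one_nonneg {r : ℝ} (h0 : 0 ≤ r) {p : ℕ} (hp : p ≠ 0) (h : r ^ p = 1) :
    r = 1 := by
  rcases lt_trichotomy r 1 with h1 | h1 | h1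
  · have := pow_lt_one₀ h0 h1 hp
    rw [h] at this
    exact absurd this (lt_irrefl 1)
  · exact h1
  · have := one_lt_pow₀ h1 hp
    rw [h] at this
    exact absurd this (lt_irrefl 1)

lemma Tmat_apply {n m a : ℕ} (h : a ≤ m) (h' : (m - a) + a = m) (z : Vnm n m)
    (u : EuclideanSpace ℂ (Fin a → Fin n)) (J : Fin (m - a) → Fin n) :
    Tmat a h z u J = ∑ K : Fin a → Fin n, z (mg h' J K) * u K := by
  have h1 : ∀ K : Fin a → Fin n,
      (castV (by omega : m = (m - a) + a) z) (Fin.append J K) = z (mg h' J K) := by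
    intro K
    unfold castV
    simp only [WithLp.ofLp_toLp]
    apply congrArg
    funext i
    rcases lt_or_ge (i : ℕ) (m - a) with hi | hi
    · have : Fin.cast (by omega : m = (m-a)+a) i = Fin.castAdd a ⟨(i:ℕ), hi⟩ := by
        apply Fin.ext; simp
      rw [this, Fin.append_left]
      simp [mg, hi]
    · have : Fin.cast (by omega : m = (m-a)+a) i
          = Fin.natAdd (m-a) ⟨(i:ℕ) - (m - a), by omega⟩ := by
        apply Fin.ext; simp; omega
      rw [this, Fin.append_right]
      simp only [mg]
      rw [dif_neg (by omega)]
  show (Matrix.toEuclideanLin _) u J = _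
  rw [Matrix.toEuclideanLin_apply]
  show Matrix.mulVec _ _ J = _
  unfold Matrix.mulVec dotProduct
  apply Finset.sum_congr rfl
  intro K _
  show (Matrix.of (fun J K => castV _ z (Fin.append J K)) J K) * _ = _
  rw [Matrix.of_apply, h1 K]

end SC5

set_option maxHeartbeats 2000000 in
/-- if moreover `X = Y`, i.e. `v = c · T_{m−a}(conj X) T_a(X) v` with
`v ≠ 0`, `|c| = 1`, then `c = 1` and `X` is periodic. -/
theorem subCuntz_stmt5 {n m a : ℕ} (hn : 2 ≤ n) (hm : 2 ≤ m)
    (ha1 : 1 ≤ a) (ha2 : a ≤ m - 1)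
    (X : Vnm n m) (hX : ‖X‖ = 1)
    (v : Vnm n a) (hv : v ≠ 0) (c : ℂ) (hc : ‖c‖ = 1)
    (heq : v = c • castV (by omega : m - (m - a) = a)
      (Tmat (m - a) (by omega) (conjV X) (Tmat a (by omega) X v))) :
    c = 1 ∧ PeriodicV X := by
  classical
  haveI : NeZero n := ⟨by omega⟩
  open SC5 in
  set b := m - a with hbdef
  have hab : a + b = m := by omega
  have hba : b + a = m := by omega
  have hb1 : 1 ≤ b := by omega
  have hblem : b ≤ m := by omega
  have halem : a ≤ m := by omega
  -- the inner operator application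
  set w : EuclideanSpace ℂ (Fin b → Fin n) := Tmat a (by omega) X v with hwdef
  have hwJ : ∀ J, w J = ∑ K, X (SC5.mg hba J K) * v K := by
    intro J
    exact SC5.Tmat_apply (by omega) hba X v J
  -- unfold heq into coordinates
  have hmb : m - b = a := by omega
  have hv1 : ∀ K₀ : Fin a → Fin n,
      v K₀ = c * ∑ J : Fin b → Fin n, (starRingEnd ℂ) (X (SC5.mg hab K₀ J)) * w J := by
    intro K₀
    have h0 : v K₀ = (c • castV (by omega : m - (m - a) = a)
        (Tmat (m - a) (by omega) (conjV X) (Tmat a (by omega) X v))) K₀ := by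
      rw [← heq]
    rw [h0]
    have h2 : (castV (by omega : m - (m - a) = a)
        (Tmat (m - a) (by omega) (conjV X) (Tmat a (by omega) X v))) K₀
        = (Tmat b (by omega) (conjV X) w) (fun i => K₀ (Fin.cast hmb i)) := by
      rfl
    have h3 : (Tmat b (by omega) (conjV X) w) (fun i => K₀ (Fin.cast hmb i))
        = ∑ J : Fin b → Fin n, (conjV X) (SC5.mg (by omega : (m - b) + b = m)
            (fun i => K₀ (Fin.cast hmb i)) J) * w J :=
      SC5.Tmat_apply (by omega) (by omega) (conjV X) w _
    have h4 : ∀ J : Fin b → Fin n, SC5.mg (by omega : (m - b) + b = m)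
        (fun i => K₀ (Fin.cast hmb i)) J = SC5.mg hab K₀ J := by
      intro J
      funext i
      simp only [SC5.mg]
      by_cases hia : (i : ℕ) < a
      · rw [dif_pos (by omega), dif_pos hia]
        exact congrArg K₀ (Fin.ext rfl)
      · rw [dif_neg (by omega), dif_neg hia]
        exact congrArg J (Fin.ext (by simp; omega))
    rw [PiLp.smul_apply, smul_eq_mul]
    rw [h2, h3]
    congr 1
    apply Finset.sum_congr rfl
    intro J _
    rw [h4 J]
    rfl
  -- norm setup
  have hX2 : ∑ M, ‖X M‖ ^ 2 = 1 := by
    rw [← SC5.norm_sq_eq, hX]; norm_num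
  set rA : (Fin b → Fin n) → EuclideanSpace ℂ (Fin a → Fin n) :=
    fun J => WithLp.toLp 2 (fun K => (starRingEnd ℂ) (X (SC5.mg hba J K))) with hrAdef
  have hwA : ∀ J, w J = inner ℂ (rA J) v := by
    intro J
    rw [hwJ J]
    simp only [PiLp.inner_apply, RCLike.inner_apply, hrAdef, starRingEnd_self_apply]
    exact Finset.sum_congr rfl (fun _ _ => mul_comm _ _)
  have hrAnorm : ∑ J, ‖rA J‖ ^ 2 = 1 := by
    have he : ∀ J, ‖rA J‖ ^ 2 = ∑ K, ‖X (SC5.mg hba J K)‖ ^ 2 := by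
      intro J
      rw [SC5.norm_sq_eq]
      apply Finset.sum_congr rfl
      intro K _
      simp [hrAdef]
    rw [Finset.sum_congr rfl (fun J _ => he J), ← SC5.sum_mg hba (fun M => ‖X M‖ ^ 2)]
    exact hX2
  set Bw : EuclideanSpace ℂ (Fin a → Fin n) :=
    WithLp.toLp 2 (fun K => ∑ J, (starRingEnd ℂ) (X (SC5.mg hab K J)) * w J) with hBwdef
  have hveq : v = c • Bw := by
    ext K₀
    rw [hv1 K₀]
    rfl
  set rB : (Fin a → Fin n) → EuclideanSpace ℂ (Fin b → Fin n) :=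
    fun K => WithLp.toLp 2 (fun J => X (SC5.mg hab K J)) with hrBdef
  have hBwinner : ∀ K, Bw K = inner ℂ (rB K) w := by
    intro K
    simp only [PiLp.inner_apply, RCLike.inner_apply, hrBdef, hBwdef]
    exact Finset.sum_congr rfl (fun _ _ => mul_comm _ _)
  have hrBnorm : ∑ K, ‖rB K‖ ^ 2 = 1 := by
    have he : ∀ K, ‖rB K‖ ^ 2 = ∑ J, ‖X (SC5.mg hab K J)‖ ^ 2 := by
      intro K
      rw [SC5.norm_sq_eq]
    rw [Finset.sum_congr rfl (fun K _ => he K), ← SC5.sum_mg hab (fun M => ‖X M‖ ^ 2)]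
    exact hX2
  -- Cauchy-Schwarz chain
  have hw_le : ∀ J, ‖w J‖ ^ 2 ≤ ‖rA J‖ ^ 2 * ‖v‖ ^ 2 := by
    intro J
    rw [hwA J]
    have h1 := norm_inner_le_norm (𝕜 := ℂ) (rA J) v
    have h2 : (0:ℝ) ≤ ‖(inner ℂ (rA J) v)‖ := norm_nonneg _
    nlinarith [norm_nonneg (rA J), norm_nonneg v]
  have hB_le : ∀ K, ‖Bw K‖ ^ 2 ≤ ‖rB K‖ ^ 2 * ‖w‖ ^ 2 := by
    intro K
    rw [hBwinner K]
    have h1 := norm_inner_le_norm (𝕜 := ℂ) (rB K) w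
    have h2 : (0:ℝ) ≤ ‖(inner ℂ (rB K) w)‖ := norm_nonneg _
    nlinarith [norm_nonneg (rB K), norm_nonneg w]
  have hwv : ‖w‖ ^ 2 ≤ ‖v‖ ^ 2 := by
    rw [SC5.norm_sq_eq w]
    calc ∑ J, ‖w J‖ ^ 2 ≤ ∑ J, ‖rA J‖ ^ 2 * ‖v‖ ^ 2 :=
          Finset.sum_le_sum (fun J _ => hw_le J)
      _ = (∑ J, ‖rA J‖ ^ 2) * ‖v‖ ^ 2 := by rw [Finset.sum_mul]
      _ = ‖v‖ ^ 2 := by rw [hrAnorm, one_mul]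
  have hBw_le : ‖Bw‖ ^ 2 ≤ ‖w‖ ^ 2 := by
    rw [SC5.norm_sq_eq Bw]
    calc ∑ K, ‖Bw K‖ ^ 2 ≤ ∑ K, ‖rB K‖ ^ 2 * ‖w‖ ^ 2 :=
          Finset.sum_le_sum (fun K _ => hB_le K)
      _ = (∑ K, ‖rB K‖ ^ 2) * ‖w‖ ^ 2 := by rw [Finset.sum_mul]
      _ = ‖w‖ ^ 2 := by rw [hrBnorm, one_mul]
  have hvBw : ‖v‖ = ‖Bw‖ := by
    rw [hveq, norm_smul, hc, one_mul]
  have hwv_eq : ‖w‖ ^ 2 = ‖v‖ ^ 2 := by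
    have : ‖v‖ ^ 2 ≤ ‖w‖ ^ 2 := by rw [hvBw]; exact hBw_le
    linarith
  have hBw_eq : ‖Bw‖ ^ 2 = ‖w‖ ^ 2 := by
    rw [← hvBw, hwv_eq]
  -- per-term equalities
  have hA_eq : ∀ J, ‖w J‖ ^ 2 = ‖rA J‖ ^ 2 * ‖v‖ ^ 2 := by
    have hsum : ∑ J, (‖rA J‖ ^ 2 * ‖v‖ ^ 2 - ‖w J‖ ^ 2) = 0 := by
      rw [Finset.sum_sub_distrib, ← Finset.sum_mul, hrAnorm, one_mul,
        ← SC5.norm_sq_eq w, hwv_eq]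
      ring
    intro J
    have h0 := (Finset.sum_eq_zero_iff_of_nonneg
      (fun J _ => by have := hw_le J; linarith)).mp hsum J (Finset.mem_univ J)
    linarith
  have hB_eq : ∀ K, ‖Bw K‖ ^ 2 = ‖rB K‖ ^ 2 * ‖w‖ ^ 2 := by
    have hsum : ∑ K, (‖rB K‖ ^ 2 * ‖w‖ ^ 2 - ‖Bw K‖ ^ 2) = 0 := by
      rw [Finset.sum_sub_distrib, ← Finset.sum_mul, hrBnorm, one_mul,
        ← SC5.norm_sq_eq Bw, hBw_eq]
      ring
    intro K
    have h0 := (Finset.sum_eq_zero_iff_of_nonneg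
      (fun K _ => by have := hB_le K; linarith)).mp hsum K (Finset.mem_univ K)
    linarith
  -- equality in Cauchy-Schwarz: rows are multiples
  have hA_cs : ∀ J, ∃ r : ℂ, rA J = r • v := by
    intro J
    apply SC5.cs_eq hv
    apply SC5.sq_eq (norm_nonneg _) (mul_nonneg (norm_nonneg _) (norm_nonneg _))
    rw [mul_pow, ← hwA J]
    exact hA_eq J
  have hwne : w ≠ 0 := by
    intro h0
    rw [h0, norm_zero] at hwv_eq
    have : (0:ℝ) < ‖v‖ := norm_pos_iff.mpr hv
    nlinarith
  have hB_cs : ∀ K, ∃ s : ℂ, rB K = s • w := by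
    intro K
    apply SC5.cs_eq hwne
    apply SC5.sq_eq (norm_nonneg _) (mul_nonneg (norm_nonneg _) (norm_nonneg _))
    rw [mul_pow, ← hBwinner K]
    exact hB_eq K
  choose r hr using hA_cs
  choose sfun hs using hB_cs
  -- the factorization X = ξ ⊗ η
  have ht : (0:ℝ) < ‖v‖ := norm_pos_iff.mpr hv
  have htne : ((‖v‖ : ℝ) : ℂ) ≠ 0 := by
    exact_mod_cast Complex.ofReal_ne_zero.mpr (ne_of_gt ht)
  set η : Vnm n a := WithLp.toLp 2 (fun K => (starRingEnd ℂ) (v K) / ((‖v‖ : ℝ) : ℂ)) with hηdef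
  set ξ : Vnm n b := WithLp.toLp 2 (fun J => (starRingEnd ℂ) (r J) * ((‖v‖ : ℝ) : ℂ)) with hξdef
  have hXfact : ∀ J K, X (SC5.mg hba J K) = ξ J * η K := by
    intro J K
    have h1 : (starRingEnd ℂ) (X (SC5.mg hba J K)) = r J * v K := by
      have := congrArg (fun u => u K) (hr J)
      exact this
    have h3 := congrArg (starRingEnd ℂ) h1
    rw [starRingEnd_self_apply, map_mul] at h3
    rw [h3, hξdef, hηdef]
    field_simp
  have hηsq : ∑ K, ‖η K‖ ^ 2 = 1 := by
    have he : ∀ K, ‖η K‖ ^ 2 = ‖v K‖ ^ 2 / ‖v‖ ^ 2 := by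
      intro K
      rw [hηdef]
      simp only [norm_div, RCLike.norm_conj, Complex.norm_real, Real.norm_eq_abs,
        abs_of_pos ht]
      rw [div_pow]
    rw [Finset.sum_congr rfl (fun K _ => he K), ← Finset.sum_div,
      ← SC5.norm_sq_eq v, div_self (by positivity)]
  have hη1 : ‖η‖ = 1 := SC5.norm_one_of_nsq η hηsq
  have hξsq : ∑ J, ‖ξ J‖ ^ 2 = 1 := by
    have h1 : (1:ℝ) = ∑ J, ∑ K, ‖X (SC5.mg hba J K)‖ ^ 2 := by
      rw [← SC5.sum_mg hba (fun M => ‖X M‖ ^ 2)]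
      exact hX2.symm
    simp only [hXfact, norm_mul, mul_pow] at h1
    rw [← Fintype.sum_mul_sum] at h1
    rw [hηsq, mul_one] at h1
    exact h1.symm
  have hξ1 : ‖ξ‖ = 1 := SC5.norm_one_of_nsq ξ hξsq
  -- w = t • ξ
  have hηvsum : ∑ K, η K * v K = ((‖v‖ : ℝ) : ℂ) := by
    have he : ∀ K, η K * v K = ((‖v K‖ ^ 2 : ℝ) : ℂ) / ((‖v‖ : ℝ) : ℂ) := by
      intro K
      rw [hηdef]
      rw [div_mul_eq_mul_div]
      congr 1
      rw [mul_comm, Complex.mul_conj']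
      norm_cast
    rw [Finset.sum_congr rfl (fun K _ => he K), ← Finset.sum_div, ← Complex.ofReal_sum,
      ← SC5.norm_sq_eq v]
    rw [show ((‖v‖ ^ 2 : ℝ) : ℂ) = ((‖v‖ : ℝ) : ℂ) ^ 2 by push_cast; ring]
    field_simp
  have hwξ : ∀ J, w J = ((‖v‖ : ℝ) : ℂ) * ξ J := by
    intro J
    rw [hwJ J]
    have he : ∀ K, X (SC5.mg hba J K) * v K = ξ J * (η K * v K) := by
      intro K
      rw [hXfact J K]
      ring
    rw [Finset.sum_congr rfl (fun K _ => he K), ← Finset.mul_sum, hηvsum]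
    ring
  -- the second factorization
  have hXfact2' : ∀ K J, X (SC5.mg hab K J) = (sfun K * ((‖v‖ : ℝ) : ℂ)) * ξ J := by
    intro K J
    have h1 : X (SC5.mg hab K J) = sfun K * w J := by
      have := congrArg (fun u => u J) (hs K)
      exact this
    rw [h1, hwξ J]
    ring
  have hξconjsum : ∑ J, (starRingEnd ℂ) (ξ J) * ξ J = 1 := by
    have he : ∀ J, (starRingEnd ℂ) (ξ J) * ξ J = ((‖ξ J‖ ^ 2 : ℝ) : ℂ) := by
      intro J
      rw [mul_comm, Complex.mul_conj']
      norm_cast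
    rw [Finset.sum_congr rfl (fun J _ => he J), ← Complex.ofReal_sum, hξsq]
    norm_num
  have hBwα : ∀ K, Bw K = (starRingEnd ℂ) (sfun K * ((‖v‖ : ℝ) : ℂ)) * ((‖v‖ : ℝ) : ℂ) := by
    intro K
    show (∑ J, (starRingEnd ℂ) (X (SC5.mg hab K J)) * w J) = _
    have he : ∀ J, (starRingEnd ℂ) (X (SC5.mg hab K J)) * w J
        = ((starRingEnd ℂ) (sfun K * ((‖v‖ : ℝ) : ℂ)) * ((‖v‖ : ℝ) : ℂ))
          * ((starRingEnd ℂ) (ξ J) * ξ J) := by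
      intro J
      rw [hXfact2' K J, hwξ J, map_mul]
      ring
    rw [Finset.sum_congr rfl (fun J _ => he J), ← Finset.mul_sum, hξconjsum, mul_one]
  have hcc : c * (starRingEnd ℂ) c = 1 := by
    rw [Complex.mul_conj]
    norm_cast
    rw [Complex.normSq_eq_norm_sq, hc]
    norm_num
  have hXfact2 : ∀ K J, X (SC5.mg hab K J) = c * η K * ξ J := by
    intro K J
    rw [hXfact2' K J]
    congr 1
    -- sfun K * t = c * η K
    have h1 : v K = c * ((starRingEnd ℂ) (sfun K * ((‖v‖ : ℝ) : ℂ)) * ((‖v‖ : ℝ) : ℂ)) := by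
      have h2 : v K = (c • Bw) K := by rw [← hveq]
      rw [h2]
      show c * Bw K = _
      rw [hBwα K]
    have h3 : v K = ((‖v‖ : ℝ) : ℂ) * (starRingEnd ℂ) (η K) := by
      rw [hηdef]
      show v K = _ * (starRingEnd ℂ) ((starRingEnd ℂ) (v K) / _)
      rw [map_div₀, starRingEnd_self_apply, Complex.conj_ofReal]
      field_simp
    have h4 := h3.symm.trans h1
    -- t * conj ηK = c * (conj(sK t) * t)  ⇒ conj ηK = c conj(sK t) ⇒ ηK = conj c * (sK t)
    have h5 : (starRingEnd ℂ) (η K) = c * (starRingEnd ℂ) (sfun K * ((‖v‖ : ℝ) : ℂ)) := by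
      apply mul_left_cancel₀ htne
      rw [h4]
      ring
    have h6 := congrArg (starRingEnd ℂ) h5
    rw [starRingEnd_self_apply, map_mul, starRingEnd_self_apply] at h6
    rw [h6]
    have h7 : c * ((starRingEnd ℂ) c * (sfun K * ((‖v‖ : ℝ) : ℂ)))
        = (c * (starRingEnd ℂ) c) * (sfun K * ((‖v‖ : ℝ) : ℂ)) := by ring
    rw [h7, hcc, one_mul]
  -- the commutation relation in evaluation form
  have hXev1 : ∀ f : ℕ → Fin n, SC5.ev X f = SC5.ev ξ f * SC5.ev η (SC5.shift b f) := by
    intro f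
    show X (SC5.res m f) = ξ (SC5.res b f) * η (SC5.res a (SC5.shift b f))
    rw [← SC5.mg_res hba f]
    exact hXfact _ _
  have hXev2 : ∀ f : ℕ → Fin n,
      SC5.ev X f = c * η (SC5.res a f) * ξ (SC5.res b (SC5.shift a f)) := by
    intro f
    show X (SC5.res m f) = _
    rw [← SC5.mg_res hab f]
    exact hXfact2 _ _
  have hrel : ∀ f, SC5.ev ξ f * SC5.ev η (SC5.shift b f)
      = c * (SC5.ev η f * SC5.ev ξ (SC5.shift a f)) := by
    intro f
    rw [(hXev1 f).symm.trans (hXev2 f)]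
    show c * η (SC5.res a f) * ξ (SC5.res b (SC5.shift a f))
      = c * (η (SC5.res a f) * ξ (SC5.res b (SC5.shift a f)))
    ring
  -- apply the key lemma
  obtain ⟨hc1, g, hg, hga, hgb, x, hx1, θ, θ', hξx, hηx⟩ :=
    SC5.key (a + b) a b ha1 hb1 le_rfl ξ η c hξ1 hη1 hc hrel
  refine ⟨hc1, ?_⟩
  have hpg : (b / g + a / g) * g = m := by
    rw [add_mul, Nat.div_mul_cancel hgb, Nat.div_mul_cancel hga]
    omega
  have hbg1 : 1 ≤ b / g := Nat.div_pos (Nat.le_of_dvd (by omega) hgb) hg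
  have hag1 : 1 ≤ a / g := Nat.div_pos (Nat.le_of_dvd (by omega) hga) hg
  have hp2 : 2 ≤ b / g + a / g := by omega
  obtain ⟨ρ, hρ⟩ : ∃ ρ : ℂ, ρ ^ (b / g + a / g) = θ * θ' :=
    IsAlgClosed.exists_pow_nat_eq _ (by omega)
  have hx'ev : ∀ f, SC5.ev (tpowV (ρ • x) (b / g + a / g)) f = SC5.ev X f := by
    intro f
    rw [SC5.ev_tpow]
    have h1 : ∀ i : Fin (b / g + a / g),
        SC5.ev (ρ • x) (SC5.shift ((i:ℕ) * g) f) = ρ * SC5.ev x (SC5.shift ((i:ℕ) * g) f) :=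
      fun i => SC5.ev_smul ρ x _
    rw [Finset.prod_congr rfl (fun i _ => h1 i), Finset.prod_mul_distrib,
      Finset.prod_const, Finset.card_univ, Fintype.card_fin]
    rw [hXev1 f, hξx f, hηx (SC5.shift b f)]
    have hsh : ∀ i : ℕ, SC5.shift (i * g) (SC5.shift b f)
        = SC5.shift ((b / g + i) * g) f := by
      intro i
      rw [SC5.shift_shift]
      congr 1
      rw [add_mul, Nat.div_mul_cancel hgb]
    rw [Fin.prod_univ_add (f := fun i : Fin (b / g + a / g) =>
      SC5.ev x (SC5.shift ((i:ℕ) * g) f))]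
    simp only [hsh, Fin.coe_castAdd, Fin.coe_natAdd]
    rw [hρ]
    ring
  have hXeq : castV hpg (tpowV (ρ • x) (b / g + a / g)) = X :=
    SC5.ext_ev (fun f => by rw [SC5.ev_castV]; exact hx'ev f)
  have hx'n : ‖ρ • x‖ = 1 := by
    have h1 := SC5.norm_castV hpg (tpowV (ρ • x) (b / g + a / g))
    rw [hXeq, hX, SC5.norm_tpow] at h1
    exact SC5.pow_eq_one_nonneg (norm_nonneg _) (by omega : b / g + a / g ≠ 0) h1.symm
  exact ⟨g, b / g + a / g, ρ • x, hpg, hx'n, hp2, hXeq⟩
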